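/- Fix an integer N ≥ 2 and let i denote the imaginary unit. Let R be an associative unital ℂ-algebra containing elements p_1,…,p_N and invertible elements a_1,…,a_N such that all p_m commute with each other, all a_m and a_m^{-1} commute with each other, [p_m, a_k] = −i·δ_{mk}·a_k for all m,k, and elements with distinct indices commute. For u ∈ ℂ let L_m(u) be the 2×2 matrix over R with rows (u·1 − p_m, −a_m) and (a_m^{-1}, 0), let T_N(u) = L_N(u)⋯L_1(u), and let t(u) be the trace of T_N(u). Then t(u) = u^N + t_1·u^{N−1} + t_2·u^{N−2} + (lower order), where t_1 = −(p_1 + ⋯ + p_N) and t_2 = ∑_{1≤m<k≤N} p_m·p_k − ∑_{k=1}^{N−1} a_{k+1}·a_k^{−1} − a_1·a_N^{−1}. -/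

import Mathlib

noncomputable section

open Matrix Finset

namespace TodaAux

open Polynomial

variable {R : Type*} [Ring R]

def Lp (p' : ℕ → R) (a' : ℕ → Rˣ) (n : ℕ) : Matrix (Fin 2) (Fin 2) (Polynomial R) :=
  !![X - C (p' n), -C (a' n : R); C (((a' n)⁻¹ : Rˣ) : R), 0]

def T (p' : ℕ → R) (a' : ℕ → Rˣ) : ℕ → Matrix (Fin 2) (Fin 2) (Polynomial R)
  | 0 => 1
  | n+1 => Lp p' a' n * T p' a' n

variable (p' : ℕ → R) (a' : ℕ → Rˣ)

lemma T_succ_00 (n : ℕ) : (T p' a' (n+1)) 0 0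
    = (X - C (p' n)) * ((T p' a' n) 0 0) - C (a' n : R) * ((T p' a' n) 1 0) := by
  simp [T, Lp, Matrix.mul_apply, Fin.sum_univ_two, sub_eq_add_neg]

lemma T_succ_01 (n : ℕ) : (T p' a' (n+1)) 0 1
    = (X - C (p' n)) * ((T p' a' n) 0 1) - C (a' n : R) * ((T p' a' n) 1 1) := by
  simp [T, Lp, Matrix.mul_apply, Fin.sum_univ_two, sub_eq_add_neg]

lemma T_succ_10 (n : ℕ) : (T p' a' (n+1)) 1 0
    = C (((a' n)⁻¹ : Rˣ) : R) * ((T p' a' n) 0 0) := by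
  simp [T, Lp, Matrix.mul_apply, Fin.sum_univ_two]

lemma T_succ_11 (n : ℕ) : (T p' a' (n+1)) 1 1
    = C (((a' n)⁻¹ : Rˣ) : R) * ((T p' a' n) 0 1) := by
  simp [T, Lp, Matrix.mul_apply, Fin.sum_univ_two]

lemma coeff_X_sub_C_mul (c : R) (Q : Polynomial R) (j : ℕ) :
    ((X - C c) * Q).coeff j = (if j = 0 then 0 else Q.coeff (j-1)) - c * Q.coeff j := by
  rw [sub_mul, coeff_sub, coeff_C_mul]
  cases j with
  | zero => simp [mul_coeff_zero]
  | succ j => simp [coeff_X_mul]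

lemma map_fin2 {α β : Type*} (f : α → β) (A B C D : α) :
    (Matrix.map !![A, B; C, D] f) = !![f A, f B; f C, f D] := by
  ext i j
  fin_cases i <;> fin_cases j <;> simp [Matrix.map_apply]

lemma T_eq_prod (n : ℕ) :
    T p' a' n = ((List.ofFn fun m : Fin n => Lp p' a' (m : ℕ)).reverse).prod := by
  induction n with
  | zero => simp [T]
  | succ n ih =>
    rw [List.ofFn_succ']
    simp only [List.concat_eq_append, List.reverse_append, List.reverse_cons, List.reverse_nil,
      List.nil_append, List.cons_append, List.prod_cons, Fin.val_last, Fin.coe_castSucc]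
    rw [show T p' a' (n+1) = Lp p' a' n * T p' a' n from rfl, ih]

lemma invariant (hpp : ∀ m k, p' m * p' k = p' k * p' m) (n : ℕ) (hn : 1 ≤ n) :
    ((T p' a' n) 0 0).coeff n = 1 ∧
    (∀ j, n < j → ((T p' a' n) 0 0).coeff j = 0) ∧
    ((T p' a' n) 0 0).coeff (n-1) = -(∑ m ∈ range n, p' m) ∧
    (2 ≤ n → ((T p' a' n) 0 0).coeff (n-2)
        = (∑ k ∈ range n, ∑ m ∈ range k, p' m * p' k)
          - ∑ k ∈ range (n-1), (a' (k+1) : R) * (((a' k)⁻¹ : Rˣ) : R)) ∧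
    ((T p' a' n) 0 1).coeff (n-1) = -(a' 0 : R) ∧
    (∀ j, n ≤ j → ((T p' a' n) 0 1).coeff j = 0) ∧
    ((T p' a' n) 1 0).coeff (n-1) = (((a' (n-1))⁻¹ : Rˣ) : R) ∧
    (∀ j, n ≤ j → ((T p' a' n) 1 0).coeff j = 0) ∧
    (∀ j, n-1 ≤ j → ((T p' a' n) 1 1).coeff j = 0) := by
  induction n, hn using Nat.le_induction with
  | base =>
    have h00 : (T p' a' 1) 0 0 = X - C (p' 0) := by
      simp [T, Lp, Matrix.mul_apply, Fin.sum_univ_two]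
    have h01 : (T p' a' 1) 0 1 = -C (a' 0 : R) := by
      simp [T, Lp, Matrix.mul_apply, Fin.sum_univ_two]
    have h10 : (T p' a' 1) 1 0 = C (((a' 0)⁻¹ : Rˣ) : R) := by
      simp [T, Lp, Matrix.mul_apply, Fin.sum_univ_two]
    have h11 : (T p' a' 1) 1 1 = 0 := by
      simp [T, Lp, Matrix.mul_apply, Fin.sum_univ_two]
    refine ⟨?_, ?_, ?_, ?_, ?_, ?_, ?_, ?_, ?_⟩
    · simp [h00]
    · intro j hj
      rw [h00, coeff_sub, coeff_X, coeff_C, if_neg (by omega), if_neg (by omega), sub_zero]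
    · simp [h00, coeff_C]
    · intro h; exact absurd h (by norm_num)
    · simp [h01]
    · intro j hj
      rw [h01, coeff_neg, coeff_C, if_neg (by omega), neg_zero]
    · simp [h10]
    · intro j hj
      rw [h10, coeff_C, if_neg (by omega)]
    · intro j _; simp [h11]
  | succ n hn ih =>
    obtain ⟨ia, ib, ic, idd, ie, if', ig, ih', ii⟩ := ih
    have e00 := T_succ_00 p' a' n
    have e01 := T_succ_01 p' a' n
    have e10 := T_succ_10 p' a' n
    have e11 := T_succ_11 p' a' n
    refine ⟨?_, ?_, ?_, ?_, ?_, ?_, ?_, ?_, ?_⟩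
    · rw [e00, coeff_sub, coeff_X_sub_C_mul, coeff_C_mul]
      rw [if_neg (by omega)]
      simp only [Nat.add_sub_cancel, ia, ib (n+1) (by omega), ih' (n+1) (by omega)]
      simp
    · intro j hj
      rw [e00, coeff_sub, coeff_X_sub_C_mul, coeff_C_mul]
      rw [if_neg (by omega), ib (j-1) (by omega), ib j (by omega), ih' j (by omega)]
      simp
    · have hn0 : n ≠ 0 := by omega
      rw [show n+1-1 = n from rfl, e00, coeff_sub, coeff_X_sub_C_mul, coeff_C_mul,
        if_neg hn0, ic, ia, ih' n (by omega), sum_range_succ]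
      simp only [mul_one, mul_zero, sub_zero]
      abel
    · intro _
      have hnn : n+1-2 = n-1 := by omega
      rw [hnn, e00, coeff_sub, coeff_X_sub_C_mul, coeff_C_mul, ic, ig]
      have key : (if n-1 = 0 then (0:R) else ((T p' a' n) 0 0).coeff (n-1-1))
          = (∑ k ∈ range n, ∑ m ∈ range k, p' m * p' k)
            - ∑ k ∈ range (n-1), (a' (k+1) : R) * (((a' k)⁻¹ : Rˣ) : R) := by
        rcases Nat.lt_or_ge n 2 with h2 | h2
        · have hn1 : n = 1 := by omega
          subst hn1
          simp
        · rw [if_neg (by omega), show n-1-1 = n-2 from by omega, idd h2]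
      rw [key]
      have h1 : p' n * (∑ m ∈ range n, p' m) = ∑ m ∈ range n, p' m * p' n := by
        rw [Finset.mul_sum]
        exact sum_congr rfl fun m _ => hpp n m
      have h2 : ∑ k ∈ range (n+1), ∑ m ∈ range k, p' m * p' k
          = (∑ k ∈ range n, ∑ m ∈ range k, p' m * p' k) + ∑ m ∈ range n, p' m * p' n :=
        sum_range_succ _ _
      have h3 : ∑ k ∈ range (n+1-1), (a' (k+1) : R) * (((a' k)⁻¹ : Rˣ) : R)
          = (∑ k ∈ range (n-1), (a' (k+1) : R) * (((a' k)⁻¹ : Rˣ) : R))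
            + (a' n : R) * (((a' (n-1))⁻¹ : Rˣ) : R) := by
        rw [show n+1-1 = (n-1)+1 from by omega, sum_range_succ,
          show n-1+1 = n from by omega]
      rw [h2, h3, mul_neg, sub_neg_eq_add, h1]
      abel
    · have hn0 : n ≠ 0 := by omega
      rw [show n+1-1 = n from rfl, e01, coeff_sub, coeff_X_sub_C_mul, coeff_C_mul,
        if_neg hn0, ie, if' n le_rfl, ii n (by omega)]
      simp
    · intro j hj
      rw [e01, coeff_sub, coeff_X_sub_C_mul, coeff_C_mul,
        if' (j-1) (by omega), if' j (by omega), ii j (by omega)]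
      simp
    · rw [show n+1-1 = n from rfl, e10, coeff_C_mul, ia, mul_one]
    · intro j hj
      rw [e10, coeff_C_mul, ib j (by omega), mul_zero]
    · intro j hj
      rw [e11, coeff_C_mul, if' j (by omega), mul_zero]

end TodaAux

/-- The monodromy matrix `T_N(u) = L_N(u)·L_{N−1}(u)⋯L_1(u)` built from the local
Lax matrices. -/
def monodromy {R : Type*} [Ring R] {N : ℕ}
    (L : Fin N → ℂ → Matrix (Fin 2) (Fin 2) R) (u : ℂ) : Matrix (Fin 2) (Fin 2) R :=
  ((List.ofFn fun m : Fin N => L m u).reverse).prod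

open Polynomial in
/-- The trace `t(u)` of the Toda monodromy matrix is a monic polynomial in `u` of degree
`N`, `t(u) = u^N + t₁·u^{N−1} + t₂·u^{N−2} + (lower order)`, with
`t₁ = −(p₁ + ⋯ + p_N)` and
`t₂ = ∑_{m<k} p_m p_k − ∑_{k=1}^{N−1} a_{k+1}·a_k⁻¹ − a₁·a_N⁻¹`. -/
theorem toda_transfer_matrix_polynomial
    (N : ℕ) (hN : 2 ≤ N)
    (R : Type*) [Ring R] [Algebra ℂ R] (p : Fin N → R) (a : Fin N → Rˣ)
    (hpp : ∀ m k, p m * p k = p k * p m)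
    (haa : ∀ m k, (a m : R) * (a k : R) = (a k : R) * (a m : R))
    (haainv : ∀ m k, (a m : R) * (((a k)⁻¹ : Rˣ) : R) = (((a k)⁻¹ : Rˣ) : R) * (a m : R))
    (hainvinv : ∀ m k, (((a m)⁻¹ : Rˣ) : R) * (((a k)⁻¹ : Rˣ) : R)
        = (((a k)⁻¹ : Rˣ) : R) * (((a m)⁻¹ : Rˣ) : R))
    (hpa : ∀ m k, p m * (a k : R) - (a k : R) * p m
        = if m = k then -(algebraMap ℂ R Complex.I) * (a k : R) else 0)
    (hpainv : ∀ m k, m ≠ k → p m * (((a k)⁻¹ : Rˣ) : R) = (((a k)⁻¹ : Rˣ) : R) * p m)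
    (L : Fin N → ℂ → Matrix (Fin 2) (Fin 2) R)
    (hL : ∀ m (u : ℂ),
      L m u = !![algebraMap ℂ R u - p m, -(a m : R); (((a m)⁻¹ : Rˣ) : R), 0]) :
    ∃ t : ℕ → R,
      t 0 = 1 ∧
      t 1 = -(∑ m : Fin N, p m) ∧
      t 2 = (∑ q ∈ Finset.univ.filter (fun q : Fin N × Fin N => q.1 < q.2), p q.1 * p q.2)
          - (∑ k : Fin (N - 1),
              ((a (Fin.cast (by omega) k.succ) : R) *
                (((a (Fin.castLE (by omega) k.castSucc))⁻¹ : Rˣ) : R)))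
          - (a ⟨0, by omega⟩ : R) * (((a ⟨N - 1, by omega⟩)⁻¹ : Rˣ) : R) ∧
      ∀ u : ℂ, Matrix.trace (monodromy L u)
          = ∑ k ∈ Finset.range (N + 1), algebraMap ℂ R (u ^ (N - k)) * t k := by
  classical
  set p' : ℕ → R := fun n => if h : n < N then p ⟨n, h⟩ else 0 with hp'def
  set a' : ℕ → Rˣ := fun n => if h : n < N then a ⟨n, h⟩ else 1 with ha'def
  have hp'lt : ∀ (n : ℕ) (h : n < N), p' n = p ⟨n, h⟩ := fun n h => dif_pos h
  have ha'lt : ∀ (n : ℕ) (h : n < N), a' n = a ⟨n, h⟩ := fun n h => dif_pos h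
  have hpp' : ∀ m k, p' m * p' k = p' k * p' m := by
    intro m k
    by_cases hm : m < N <;> by_cases hk : k < N <;>
      simp [hp'def, hm, hk, hpp]
  -- the evaluation ring hom at a central point
  have hc : ∀ (u : ℂ) (r : R), Commute ((RingHom.id R) r) (algebraMap ℂ R u) :=
    fun u r => (Algebra.commutes u r).symm
  let φ : ℂ → (Polynomial R →+* R) := fun u =>
    eval₂RingHom' (RingHom.id R) (algebraMap ℂ R u) (hc u)
  have hLmap : ∀ (u : ℂ) (m : Fin N), L m u = (TodaAux.Lp p' a' (m : ℕ)).map (φ u) := by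
    intro u m
    rw [hL]
    have h1 : p' (m : ℕ) = p m := by rw [hp'lt _ m.isLt]
    have h2 : a' (m : ℕ) = a m := by rw [ha'lt _ m.isLt]
    have hx : (φ u) X = algebraMap ℂ R u := eval₂_X _ _
    have hCr : ∀ r : R, (φ u) (C r) = r := fun r => eval₂_C _ _
    rw [show TodaAux.Lp p' a' (m : ℕ)
        = !![X - C (p' (m : ℕ)), -C (a' (m : ℕ) : R); C (((a' (m : ℕ))⁻¹ : Rˣ) : R), 0]
      from rfl, TodaAux.map_fin2]
    simp only [map_sub, map_neg, map_zero, hx, hCr, h1, h2]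
  have hmono : ∀ u : ℂ, monodromy L u = ((φ u).mapMatrix) (TodaAux.T p' a' N) := by
    intro u
    rw [monodromy, TodaAux.T_eq_prod, map_list_prod, List.map_reverse]
    congr 1
    rw [List.map_ofFn]
    refine congrArg List.reverse (congrArg List.ofFn (funext fun m => ?_))
    rw [Function.comp_apply, RingHom.mapMatrix_apply]
    exact hLmap u m
  set Tr : Polynomial R := (TodaAux.T p' a' N) 0 0 + (TodaAux.T p' a' N) 1 1 with hTrdef
  have htr : ∀ u : ℂ, Matrix.trace (monodromy L u) = (φ u) Tr := by
    intro u
    rw [hmono u, Matrix.trace_fin_two, hTrdef, map_add]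
    rfl
  obtain ⟨ja, jb, jc, jd, _, _, _, _, ji⟩ := TodaAux.invariant p' a' hpp' N (by omega)
  obtain ⟨_, _, _, _, ke, _, _, _, _⟩ := TodaAux.invariant p' a' hpp' (N-1) (by omega)
  have hT11 : (TodaAux.T p' a' N) 1 1
      = C (((a' (N-1))⁻¹ : Rˣ) : R) * ((TodaAux.T p' a' (N-1)) 0 1) := by
    have := TodaAux.T_succ_11 p' a' (N-1)
    rwa [show N-1+1 = N from by omega] at this
  have hdeg : Tr.natDegree < N + 1 := by
    rw [Nat.lt_succ_iff, natDegree_le_iff_coeff_eq_zero]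
    intro j hj
    rw [hTrdef, coeff_add, jb j hj, ji j (by omega), add_zero]
  refine ⟨fun k => Tr.coeff (N - k), ?_, ?_, ?_, ?_⟩
  · show Tr.coeff (N - 0) = 1
    rw [Nat.sub_zero, hTrdef, coeff_add, ja, ji N (by omega), add_zero]
  · show Tr.coeff (N - 1) = _
    rw [hTrdef, coeff_add, jc, ji (N-1) le_rfl, add_zero]
    congr 1
    rw [← Fin.sum_univ_eq_sum_range (fun m => p' m) N]
    exact Finset.sum_congr rfl fun m _ => by rw [hp'lt _ m.isLt]
  · show Tr.coeff (N - 2) = _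
    rw [hTrdef, coeff_add, jd hN, hT11, coeff_C_mul]
    have hke : ((TodaAux.T p' a' (N-1)) 0 1).coeff (N-2) = -(a' 0 : R) := by
      have := ke; rwa [show N-1-1 = N-2 from by omega] at this
    rw [hke, mul_neg, ← sub_eq_add_neg]
    have hs2 : (∑ k ∈ range N, ∑ m ∈ range k, p' m * p' k)
        = ∑ q ∈ Finset.univ.filter (fun q : Fin N × Fin N => q.1 < q.2), p q.1 * p q.2 := by
      rw [Finset.sum_filter, Fintype.sum_prod_type, Finset.sum_comm,
        ← Fin.sum_univ_eq_sum_range (fun k => ∑ m ∈ range k, p' m * p' k) N]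
      refine Finset.sum_congr rfl fun k _ => ?_
      have hfil : (range N).filter (fun m => m < (k : ℕ)) = range (k : ℕ) := by
        ext x
        simp only [Finset.mem_filter, Finset.mem_range]
        omega
      rw [show (∑ m ∈ range (k : ℕ), p' m * p' (k : ℕ))
          = ∑ m ∈ (range N).filter (fun m => m < (k : ℕ)), p' m * p' (k : ℕ) from by
            rw [hfil]]
      rw [Finset.sum_filter, ← Fin.sum_univ_eq_sum_range
        (fun m => if m < (k : ℕ) then p' m * p' (k : ℕ) else 0) N]
      refine Finset.sum_congr rfl fun m _ => ?_
      by_cases h : (m : ℕ) < (k : ℕ)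
      · rw [if_pos h, if_pos (show m < k from Fin.lt_def.mpr h),
          hp'lt _ m.isLt, hp'lt _ k.isLt]
      · rw [if_neg h, if_neg (show ¬ m < k from fun hc => h (Fin.lt_def.mp hc))]
    have he : (∑ k ∈ range (N-1), (a' (k+1) : R) * (((a' k)⁻¹ : Rˣ) : R))
        = ∑ k : Fin (N - 1),
            ((a (Fin.cast (by omega) k.succ) : R) *
              (((a (Fin.castLE (by omega) k.castSucc))⁻¹ : Rˣ) : R)) := by
      rw [← Fin.sum_univ_eq_sum_range
        (fun k => (a' (k+1) : R) * (((a' k)⁻¹ : Rˣ) : R)) (N-1)]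
      refine Finset.sum_congr rfl fun k _ => ?_
      have hk1 : ((k : ℕ) + 1) < N := by omega
      have hk2 : (k : ℕ) < N := by omega
      have e1 : a' ((k : ℕ)+1) = a (Fin.cast (by omega : N - 1 + 1 = N) k.succ) := by
        rw [ha'lt _ hk1]
        congr 1
      have e2 : a' (k : ℕ) = a (Fin.castLE (by omega : N - 1 + 1 ≤ N) k.castSucc) := by
        rw [ha'lt _ hk2]
        congr 1
      rw [e1, e2]
    have hlast : (((a' (N-1))⁻¹ : Rˣ) : R) * (a' 0 : R)
        = (a ⟨0, by omega⟩ : R) * (((a ⟨N - 1, by omega⟩)⁻¹ : Rˣ) : R) := by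
      rw [ha'lt 0 (by omega), ha'lt (N-1) (by omega)]
      exact (haainv ⟨0, by omega⟩ ⟨N-1, by omega⟩).symm
    rw [hs2, he, hlast]
  · intro u
    rw [htr u]
    have hsum : (∑ k ∈ Finset.range (N + 1),
          algebraMap ℂ R (u ^ (N - k)) * Tr.coeff (N - k))
        = ∑ j ∈ Finset.range (N + 1), algebraMap ℂ R (u ^ j) * Tr.coeff j := by
      have := Finset.sum_range_reflect
        (fun j => algebraMap ℂ R (u ^ j) * Tr.coeff j) (N+1)
      simpa using this
    rw [hsum]
    have heval : (φ u) Tr = ∑ i ∈ Finset.range (N+1),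
        (RingHom.id R) (Tr.coeff i) * (algebraMap ℂ R u) ^ i := by
      have : (φ u) Tr = eval₂ (RingHom.id R) (algebraMap ℂ R u) Tr := rfl
      rw [this, eval₂_eq_sum_range' (RingHom.id R) hdeg (algebraMap ℂ R u)]
    rw [heval]
    refine Finset.sum_congr rfl fun i _ => ?_
    rw [RingHom.id_apply, ← map_pow]
    exact (Algebra.commutes (u ^ i) (Tr.coeff i)).symm
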